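/- For any set P of 2k points in the plane there exist a point o ∈ ℝ² and a partition of P into k pairs P_1, …, P_k such that, for every i ∈ {1,…,k}, the Euclidean distance from o to the segment joining the two points of P_i is at most (1/2)·diam(P_i), and hence at most (1/2)·diam(P), where diam denotes the diameter of a point set. -/

import Mathlib

noncomputable section

/-- Points of the plane with the Euclidean norm. -/
abbrev Pt : Type := EuclideanSpace ℝ (Fin 2)

/-- The closed disk with diameter the segment `pq`: center `(p+q)/2`, radius `‖p-q‖/2`. -/
def disk (p q : Pt) : Set Pt := Metric.closedBall (midpoint ℝ p q) (dist p q / 2)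


/-- A fixed-point-free involution of the index set: a perfect matching of the indices. -/
def IsPairing {m : ℕ} (σ : Equiv.Perm (Fin m)) : Prop := ∀ i, σ i ≠ i ∧ σ (σ i) = i

/-- Twice the total Euclidean length of the matching induced by the pairing `σ`. -/
def matchCost {m : ℕ} (x : Fin m → Pt) (σ : Equiv.Perm (Fin m)) : ℝ :=
  ∑ i, dist (x i) (x (σ i))

/-- The pairing `σ` is a max-sum matching of the points `x 0, …, x (m-1)`. -/
def IsMaxSumMatching {m : ℕ} (x : Fin m → Pt) (σ : Equiv.Perm (Fin m)) : Prop :=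
  IsPairing σ ∧ ∀ τ : Equiv.Perm (Fin m), IsPairing τ → matchCost x τ ≤ matchCost x σ

lemma aux_norm (a b : Pt) (h : (inner ℝ a b : ℝ) ≤ 0) : ‖a + b‖ ≤ ‖a - b‖ := by
  have h3 : ‖a + b‖ ^ 2 ≤ ‖a - b‖ ^ 2 := by
    rw [norm_add_sq_real, norm_sub_sq_real]; linarith
  nlinarith [norm_nonneg (a + b), norm_nonneg (a - b)]

lemma aux_key (o p q : Pt) (h : (inner ℝ (p - o) (q - o) : ℝ) ≤ 0) :
    Metric.infDist o (segment ℝ p q) ≤ dist p q / 2 := by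
  have hm : midpoint ℝ p q ∈ segment ℝ p q := midpoint_mem_segment p q
  have h1 : Metric.infDist o (segment ℝ p q) ≤ dist o (midpoint ℝ p q) :=
    Metric.infDist_le_dist_of_mem hm
  have h2 : dist o (midpoint ℝ p q) = ‖(p - o) + (q - o)‖ / 2 := by
    rw [dist_eq_norm, midpoint_eq_smul_add, invOf_eq_inv]
    have : o - (2⁻¹ : ℝ) • (p + q) = (-(2⁻¹) : ℝ) • ((p - o) + (q - o)) := by module
    rw [this, norm_smul]
    simp; ring
  have h4 := aux_norm _ _ h
  have h5 : (p - o) - (q - o) = p - q := by abel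
  rw [h5] at h4
  rw [dist_eq_norm]
  linarith

lemma aux_split {α : Type*} [DecidableEq α] (f : α → ℝ) :
    ∀ (k : ℕ) (P : Finset α), k ≤ P.card →
      ∃ S, S ⊆ P ∧ S.card = k ∧ ∀ p ∈ S, ∀ q ∈ P \ S, f p ≤ f q := by
  intro k
  induction k with
  | zero => exact fun P _ => ⟨∅, by simp⟩
  | succ n ih =>
    intro P hP
    have hne : P.Nonempty := Finset.card_pos.mp (by omega)
    obtain ⟨m, hm, hmin⟩ := P.exists_min_image f hne
    obtain ⟨S, hS, hcard, hS2⟩ := ih (P.erase m) (by rw [Finset.card_erase_of_mem hm]; omega)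
    have hmS : m ∉ S := fun h => (Finset.mem_erase.mp (hS h)).1 rfl
    refine ⟨insert m S, ?_, ?_, ?_⟩
    · intro a ha
      rcases Finset.mem_insert.mp ha with h | h
      · exact h ▸ hm
      · exact (Finset.mem_erase.mp (hS h)).2
    · rw [Finset.card_insert_of_notMem hmS, hcard]
    · intro p hp q hq
      have hq' := Finset.mem_sdiff.mp hq
      rcases Finset.mem_insert.mp hp with h | h
      · exact h ▸ hmin q hq'.1
      · apply hS2 p h q
        rw [Finset.mem_sdiff]
        refine ⟨Finset.mem_erase.mpr ⟨?_, hq'.1⟩, ?_⟩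
        · intro he; exact hq'.2 (he ▸ Finset.mem_insert_self m S)
        · intro he; exact hq'.2 (Finset.mem_insert_of_mem he)

def swapHalfFun (k : ℕ) : Fin (2*k) → Fin (2*k) := fun i =>
  ⟨if (i:ℕ) < k then (i:ℕ) + k else (i:ℕ) - k, by have := i.isLt; split <;> omega⟩

lemma swapHalf_inv (k : ℕ) : Function.Involutive (swapHalfFun k) := by
  intro i
  have hi := i.isLt
  apply Fin.ext
  simp only [swapHalfFun]
  split <;> split <;> omega

def swapHalf (k : ℕ) : Equiv.Perm (Fin (2*k)) :=
  Function.Involutive.toPerm (swapHalfFun k) (swapHalf_inv k)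

lemma swapHalf_pairing (k : ℕ) : ∀ i, swapHalf k i ≠ i ∧ swapHalf k (swapHalf k i) = i := by
  intro i
  refine ⟨?_, swapHalf_inv k i⟩
  have hi := i.isLt
  intro he
  have := congrArg Fin.val he
  simp only [swapHalf, Function.Involutive.coe_toPerm, swapHalfFun] at this
  split at this <;> omega

lemma swapHalf_lt {k : ℕ} (i : Fin (2*k)) (h : (i:ℕ) < k) :
    ((swapHalf k i : Fin (2*k)) : ℕ) = (i:ℕ) + k := by
  simp only [swapHalf, Function.Involutive.coe_toPerm, swapHalfFun]
  split <;> omega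


lemma getElem_congr' {α} (l : List α) {i j : ℕ} (h : i = j) (hi : i < l.length)
    (hj : j < l.length) : l[i]'hi = l[j]'hj := by subst h; rfl

lemma list4 {α : Type*} {l1 l2 l3 l4 : List α} {a k n : ℕ}
    (h1 : l1.length = a) (h2 : l2.length = k - a) (h4 : l4.length = a) (h3 : l3.length = k - a)
    (hak : a ≤ k) (hn : n < k)
    (hb1 : n < ((l1++l2)++(l4++l3)).length) (hb2 : n + k < ((l1++l2)++(l4++l3)).length) :
    (((l1++l2)++(l4++l3))[n]'hb1 ∈ l1 ∧ ((l1++l2)++(l4++l3))[n+k]'hb2 ∈ l4) ∨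
    (((l1++l2)++(l4++l3))[n]'hb1 ∈ l2 ∧ ((l1++l2)++(l4++l3))[n+k]'hb2 ∈ l3) := by
  have hlu : (l1++l2).length = k := by rw [List.length_append]; omega
  have hlv : (l4++l3).length = k := by rw [List.length_append]; omega
  have e1 : ((l1++l2)++(l4++l3))[n]'hb1 = (l1++l2)[n]'(by omega) :=
    List.getElem_append_left (by omega)
  have e2 : ((l1++l2)++(l4++l3))[n+k]'hb2 = (l4++l3)[(n+k) - (l1++l2).length]'(by omega) :=
    List.getElem_append_right (by omega)
  have e2' : ((l1++l2)++(l4++l3))[n+k]'hb2 = (l4++l3)[n]'(by omega) := by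
    rw [e2]; exact getElem_congr' _ (by omega) _ _
  by_cases hna : n < a
  · left
    constructor
    · rw [e1, List.getElem_append_left (by omega : n < l1.length)]
      exact List.getElem_mem _
    · rw [e2', List.getElem_append_left (by omega : n < l4.length)]
      exact List.getElem_mem _
  · right
    constructor
    · rw [e1, List.getElem_append_right (by omega : l1.length ≤ n)]
      exact List.getElem_mem _
    · rw [e2', List.getElem_append_right (by omega : l4.length ≤ n)]
      exact List.getElem_mem _

/-- Enumeration of `P` adapted to the two halving sets `L` and `B`. -/
lemma enum_quadrants {α : Type*} [DecidableEq α] {k : ℕ} {P L B : Finset α}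
    (hLP : L ⊆ P) (hBP : B ⊆ P) (hP : P.card = 2*k) (hLc : L.card = k) (hBc : B.card = k) :
    ∃ x : Fin (2*k) → α, Function.Injective x ∧ Set.range x = ↑P ∧
      ∀ i : Fin (2*k), (i:ℕ) < k →
        (x i ∈ L ∧ x (swapHalf k i) ∉ L) ∧
        ((x i ∈ B ∧ x (swapHalf k i) ∉ B) ∨ (x (swapHalf k i) ∈ B ∧ x i ∉ B)) := by
  classical
  have hRc : (P \ L).card = k := by rw [Finset.card_sdiff_of_subset hLP]; omega
  have h12 : (L ∩ B).card + (L \ B).card = k := by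
    rw [Finset.card_inter_add_card_sdiff, hLc]
  have h34 : ((P \ L) ∩ B).card + ((P \ L) \ B).card = k := by
    rw [Finset.card_inter_add_card_sdiff, hRc]
  have h13 : (L ∩ B).card + ((P \ L) ∩ B).card = k := by
    have e1 : L ∩ B = B ∩ L := Finset.inter_comm L B
    have e2 : (P \ L) ∩ B = B \ L := by
      ext b
      simp only [Finset.mem_inter, Finset.mem_sdiff]
      exact ⟨fun ⟨⟨_, h2⟩, h3⟩ => ⟨h3, h2⟩, fun ⟨hh1, hh2⟩ => ⟨⟨hBP hh1, hh2⟩, hh1⟩⟩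
    rw [e1, e2, Finset.card_inter_add_card_sdiff, hBc]
  have hl1len : (L ∩ B).toList.length = (L ∩ B).card := Finset.length_toList _
  have hl2len : (L \ B).toList.length = k - (L ∩ B).card := by
    rw [Finset.length_toList]; omega
  have hl3len : ((P \ L) ∩ B).toList.length = k - (L ∩ B).card := by
    rw [Finset.length_toList]; omega
  have hl4len : ((P \ L) \ B).toList.length = (L ∩ B).card := by
    rw [Finset.length_toList]; omega
  have hak : (L ∩ B).card ≤ k := by omega
  -- the big list
  have hlllen :
      (((L ∩ B).toList ++ (L \ B).toList) ++ (((P \ L) \ B).toList ++ ((P \ L) ∩ B).toList)).length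
        = 2 * k := by
    simp only [List.length_append]
    omega
  set ll := ((L ∩ B).toList ++ (L \ B).toList) ++ (((P \ L) \ B).toList ++ ((P \ L) ∩ B).toList)
    with hlldef
  have hmemLu : ∀ b : α, b ∈ (L ∩ B).toList ++ (L \ B).toList ↔ b ∈ L := by
    intro b
    rw [List.mem_append, Finset.mem_toList, Finset.mem_toList]
    simp only [Finset.mem_inter, Finset.mem_sdiff]
    tauto
  have hmemLv : ∀ b : α, b ∈ ((P \ L) \ B).toList ++ ((P \ L) ∩ B).toList ↔ b ∈ P \ L := by
    intro b
    rw [List.mem_append, Finset.mem_toList, Finset.mem_toList]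
    simp only [Finset.mem_inter, Finset.mem_sdiff]
    tauto
  have hmem : ∀ b : α, b ∈ ll ↔ b ∈ P := by
    intro b
    rw [hlldef, List.mem_append, hmemLu, hmemLv, Finset.mem_sdiff]
    constructor
    · rintro (h | h)
      · exact hLP h
      · exact h.1
    · intro h
      by_cases hbl : b ∈ L
      · exact Or.inl hbl
      · exact Or.inr ⟨h, hbl⟩
  have hnd : ll.Nodup := by
    rw [hlldef, List.nodup_append]
    refine ⟨?_, ?_, ?_⟩
    · rw [List.nodup_append]
      refine ⟨Finset.nodup_toList _, Finset.nodup_toList _, ?_⟩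
      intro b hb1 c hb2 hbc
      rw [Finset.mem_toList, Finset.mem_inter] at hb1
      rw [Finset.mem_toList, Finset.mem_sdiff] at hb2
      subst hbc
      exact hb2.2 hb1.2
    · rw [List.nodup_append]
      refine ⟨Finset.nodup_toList _, Finset.nodup_toList _, ?_⟩
      intro b hb1 c hb2 hbc
      rw [Finset.mem_toList, Finset.mem_sdiff] at hb1
      rw [Finset.mem_toList, Finset.mem_inter] at hb2
      subst hbc
      exact hb1.2 hb2.2
    · intro b hb1 c hb2 hbc
      rw [hmemLu] at hb1
      rw [hmemLv, Finset.mem_sdiff] at hb2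
      subst hbc
      exact hb2.2 hb1
  refine ⟨fun i => ll.get (Fin.cast hlllen.symm i), ?_, ?_, ?_⟩
  · intro i j hij
    have h1 := List.nodup_iff_injective_get.mp hnd hij
    have h2 : (i:ℕ) = (j:ℕ) := congrArg (fun f : Fin ll.length => f.1) h1
    exact Fin.ext h2
  · ext b
    simp only [Set.mem_range, Finset.mem_coe]
    constructor
    · rintro ⟨i, rfl⟩
      rw [← hmem]
      exact List.get_mem ll _
    · intro hb
      obtain ⟨n, hn⟩ := List.mem_iff_get.mp ((hmem b).mpr hb)
      refine ⟨Fin.cast hlllen n, ?_⟩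
      have : Fin.cast hlllen.symm (Fin.cast hlllen n) = n := Fin.ext rfl
      rw [this]
      exact hn
  · intro i hik
    beta_reduce
    have hσ : ((swapHalf k i : Fin (2*k)) : ℕ) = (i:ℕ) + k := swapHalf_lt i hik
    have hb1 : (i:ℕ) < ll.length := by rw [hlllen]; exact i.isLt
    have hb2 : (i:ℕ) + k < ll.length := by rw [hlllen]; omega
    have e1 : ll.get (Fin.cast hlllen.symm i) = ll[(i:ℕ)]'hb1 := rfl
    have e2 : ll.get (Fin.cast hlllen.symm (swapHalf k i)) = ll[(i:ℕ)+k]'hb2 := by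
      have : ll.get (Fin.cast hlllen.symm (swapHalf k i))
          = ll[((swapHalf k i : Fin (2*k)) : ℕ)]'(by rw [hlllen]; exact (swapHalf k i).isLt) := rfl
      rw [this]
      exact getElem_congr' ll hσ _ _
    have hq := list4 hl1len hl2len hl4len hl3len hak hik hb1 hb2
    rcases hq with ⟨ha1, ha4⟩ | ⟨ha2, ha3⟩
    · have t1 : ll.get (Fin.cast hlllen.symm i) ∈ L ∩ B := Finset.mem_toList.mp ha1
      have t4 : ll.get (Fin.cast hlllen.symm (swapHalf k i)) ∈ (P \ L) \ B :=
        e2.symm ▸ Finset.mem_toList.mp ha4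
      have m1 := Finset.mem_inter.mp t1
      have m4a := Finset.mem_sdiff.mp t4
      have m4b := Finset.mem_sdiff.mp m4a.1
      exact ⟨⟨m1.1, m4b.2⟩, Or.inl ⟨m1.2, m4a.2⟩⟩
    · have t2 : ll.get (Fin.cast hlllen.symm i) ∈ L \ B := Finset.mem_toList.mp ha2
      have t3 : ll.get (Fin.cast hlllen.symm (swapHalf k i)) ∈ (P \ L) ∩ B :=
        e2.symm ▸ Finset.mem_toList.mp ha3
      have m2 := Finset.mem_sdiff.mp t2
      have m3 := Finset.mem_inter.mp t3
      have m3b := Finset.mem_sdiff.mp m3.1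
      exact ⟨⟨m2.1, m3b.2⟩, Or.inr ⟨m3.2, m2.2⟩⟩

set_option maxHeartbeats 1000000 in
/-- No-dimension Tverberg-type bound: any set of 2k points in the plane can be partitioned
into k pairs so that some point o is within distance diam(P_i)/2 ≤ diam(P)/2 of (the segment
spanned by) every pair P_i. -/
theorem stmt19 (k : ℕ) (P : Finset Pt) (hP : P.card = 2 * k) :
    ∃ (o : Pt) (x : Fin (2 * k) → Pt) (σ : Equiv.Perm (Fin (2 * k))),
      Function.Injective x ∧ Set.range x = ↑P ∧ IsPairing σ ∧
      ∀ i, Metric.infDist o (segment ℝ (x i) (x (σ i))) ≤ dist (x i) (x (σ i)) / 2 ∧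
        Metric.infDist o (segment ℝ (x i) (x (σ i))) ≤ Metric.diam (↑P : Set Pt) / 2 := by
  classical
  rcases Nat.eq_zero_or_pos k with hk | hk
  · subst hk
    refine ⟨0, fun _ => 0, 1, ?_, ?_, ?_, ?_⟩
    · intro a; exact a.elim0
    · have : P = ∅ := Finset.card_eq_zero.mp (by omega)
      subst this
      simp [Set.range_eq_empty]
    · intro i; exact i.elim0
    · intro i; exact i.elim0
  have hcard : k ≤ P.card := by omega
  obtain ⟨L, hLP, hLcard, hL⟩ := aux_split (fun p : Pt => p 0) k P hcard
  obtain ⟨B, hBP, hBcard, hB⟩ := aux_split (fun p : Pt => p 1) k P hcard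
  obtain ⟨mL, hmL, hmLmax⟩ := L.exists_max_image (fun p : Pt => p 0)
    (Finset.card_pos.mp (by omega))
  obtain ⟨mB, hmB, hmBmax⟩ := B.exists_max_image (fun p : Pt => p 1)
    (Finset.card_pos.mp (by omega))
  have hLx : ∀ p ∈ L, p 0 ≤ mL 0 := hmLmax
  have hRx : ∀ q ∈ P \ L, mL 0 ≤ q 0 := fun q hq => hL mL hmL q hq
  have hBy : ∀ p ∈ B, p 1 ≤ mB 1 := hmBmax
  have hTy : ∀ q ∈ P \ B, mB 1 ≤ q 1 := fun q hq => hB mB hmB q hq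
  set o : Pt := (WithLp.equiv 2 (Fin 2 → ℝ)).symm ![mL 0, mB 1] with ho
  have hinner : ∀ p q : Pt,
      (inner ℝ (p - o) (q - o) : ℝ)
        = (p 0 - mL 0) * (q 0 - mL 0) + (p 1 - mB 1) * (q 1 - mB 1) := by
    intro p q
    simp [ho, PiLp.inner_apply, Fin.sum_univ_two, WithLp.equiv_symm_apply]
    ring
  obtain ⟨x, hinj, hrange, hquad⟩ := enum_quadrants hLP hBP hP hLcard hBcard
  have hxP : ∀ i, x i ∈ P := by
    intro i
    rw [← Finset.mem_coe, ← hrange]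
    exact ⟨i, rfl⟩
  have hip : ∀ i : Fin (2*k), (inner ℝ (x i - o) (x (swapHalf k i) - o) : ℝ) ≤ 0 := by
    have base : ∀ i : Fin (2*k), (i:ℕ) < k →
        (inner ℝ (x i - o) (x (swapHalf k i) - o) : ℝ) ≤ 0 := by
      intro i hik
      obtain ⟨⟨hpL, hqnL⟩, hBcases⟩ := hquad i hik
      have hqR : x (swapHalf k i) ∈ P \ L := Finset.mem_sdiff.mpr ⟨hxP _, hqnL⟩
      have hx1 : x i 0 - mL 0 ≤ 0 := sub_nonpos.mpr (hLx _ hpL)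
      have hx2 : 0 ≤ x (swapHalf k i) 0 - mL 0 := sub_nonneg.mpr (hRx _ hqR)
      rw [hinner]
      rcases hBcases with ⟨hpB, hqnB⟩ | ⟨hqB, hpnB⟩
      · have hy1 : x i 1 - mB 1 ≤ 0 := sub_nonpos.mpr (hBy _ hpB)
        have hy2 : 0 ≤ x (swapHalf k i) 1 - mB 1 :=
          sub_nonneg.mpr (hTy _ (Finset.mem_sdiff.mpr ⟨hxP _, hqnB⟩))
        nlinarith
      · have hy1 : x (swapHalf k i) 1 - mB 1 ≤ 0 := sub_nonpos.mpr (hBy _ hqB)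
        have hy2 : 0 ≤ x i 1 - mB 1 :=
          sub_nonneg.mpr (hTy _ (Finset.mem_sdiff.mpr ⟨hxP _, hpnB⟩))
        nlinarith
    intro i
    by_cases hik : (i:ℕ) < k
    · exact base i hik
    · have hσlt : ((swapHalf k i : Fin (2*k)) : ℕ) < k := by
        have hi := i.isLt
        simp only [swapHalf, Function.Involutive.coe_toPerm, swapHalfFun]
        split <;> omega
      have h1 := base (swapHalf k i) hσlt
      rw [(swapHalf_pairing k i).2] at h1
      rw [real_inner_comm] at h1
      exact h1
  refine ⟨o, x, swapHalf k, hinj, hrange, swapHalf_pairing k, ?_⟩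
  intro i
  have hkey := aux_key o (x i) (x (swapHalf k i)) (hip i)
  refine ⟨hkey, ?_⟩
  have hdd : dist (x i) (x (swapHalf k i)) ≤ Metric.diam (↑P : Set Pt) :=
    Metric.dist_le_diam_of_mem (Set.Finite.isBounded P.finite_toSet) (hxP i) (hxP _)
  linarith
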